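/- Let G be a finite additive abelian group with invariant factor decomposition G ≃ ⊕_{i ∈ Fin d} ℤ/(n i)ℤ, where each n i > 1 and n i divides n j whenever i ≤ j. Let H be a subgroup of G with invariant factor decomposition H ≃ ⊕_{i ∈ Fin r} ℤ/(n' i)ℤ, where each n' i > 1 and n' i divides n' j whenever i ≤ j. Then r ≤ d, and for every i ∈ Fin r, n' i divides n (d − r + i) (i.e., the invariant factors of H, aligned at the tail, divide those of G). -/

import Mathlib

def stmt18S (A : Type*) [AddCommGroup A] (p k : ℕ) : Set A :=
  {x | p • x = 0 ∧ ∃ y : A, p ^ k • y = x}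

theorem stmt18_smul_cast (m c a : ℕ) :
    c • ((a : ℕ) : ZMod m) = ((c * a : ℕ) : ZMod m) := by
  push_cast
  rw [nsmul_eq_mul]

theorem stmt18_smul_zmod (m c : ℕ) [NeZero m] (x : ZMod m) :
    c • x = ((c * x.val : ℕ) : ZMod m) := by
  conv_lhs => rw [← ZMod.natCast_rightInverse x]
  exact stmt18_smul_cast m c x.val

theorem stmt18S_zmod_ge (m p k : ℕ) (hp : p.Prime) (hm : m ≠ 0) :
    (if p ^ (k+1) ∣ m then p else 1) ≤ Nat.card (stmt18S (ZMod m) p k) := by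
  haveI : NeZero m := ⟨hm⟩
  split_ifs with h
  · obtain ⟨s, hs⟩ := h
    have hppos := hp.pos
    have hs' : s ≠ 0 := by rintro rfl; rw [Nat.mul_zero] at hs; exact hm hs
    have hmp : m / p = p ^ k * s := by
      rw [hs, pow_succ, Nat.mul_comm (p^k) p, Nat.mul_assoc, Nat.mul_div_cancel_left _ hp.pos]
    have hpm : p * (m / p) = m := by
      rw [hmp, hs, pow_succ]; ring
    have hmem : ∀ t : Fin p, ((t.val * (m / p) : ℕ) : ZMod m) ∈ stmt18S (ZMod m) p k := by
      intro t
      constructor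
      · show p • _ = 0
        rw [stmt18_smul_cast, ← Nat.mul_assoc, Nat.mul_comm p t.val, Nat.mul_assoc, hpm]
        rw [ZMod.natCast_eq_zero_iff]
        exact Dvd.intro_left _ rfl
      · refine ⟨((t.val * s : ℕ) : ZMod m), ?_⟩
        rw [stmt18_smul_cast]
        congr 1
        rw [hmp]; ring
    let f : Fin p → stmt18S (ZMod m) p k := fun t => ⟨_, hmem t⟩
    have hinj : Function.Injective f := by
      intro t1 t2 ht
      have hlt : ∀ t : Fin p, t.val * (m / p) < m := by
        intro t
        have hmp0 : 0 < m / p := by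
          apply Nat.pos_of_ne_zero; intro h0; rw [h0, Nat.mul_zero] at hpm; exact hm hpm.symm
        calc t.val * (m / p) < p * (m / p) := by
              exact Nat.mul_lt_mul_of_lt_of_le t.isLt (le_refl _) hmp0
          _ = m := hpm
      have := congrArg (fun x : stmt18S (ZMod m) p k => (x.val).val) ht
      simp only [f, ZMod.val_natCast] at this
      rw [Nat.mod_eq_of_lt (hlt t1), Nat.mod_eq_of_lt (hlt t2)] at this
      have hmp0 : m / p ≠ 0 := by
        intro h0; rw [h0, Nat.mul_zero] at hpm; exact hm hpm.symm
      exact Fin.ext (Nat.eq_of_mul_eq_mul_right (Nat.pos_of_ne_zero hmp0) this)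
    have := Nat.card_le_card_of_injective f hinj
    simpa using this
  · have : Nonempty (stmt18S (ZMod m) p k) := ⟨⟨0, ⟨smul_zero _, 0, smul_zero _⟩⟩⟩
    exact Nat.one_le_iff_ne_zero.mpr (Nat.card_ne_zero.mpr ⟨this, Set.toFinite _⟩)


theorem stmt18S_zmod_le (m p k : ℕ) (hp : p.Prime) (hm : m ≠ 0) :
    Nat.card (stmt18S (ZMod m) p k) ≤ if p ^ (k+1) ∣ m then p else 1 := by
  haveI : NeZero m := ⟨hm⟩
  split_ifs with h
  · -- card ≤ p via torsion set
    have hpm : p ∣ m := dvd_trans (dvd_pow_self p (Nat.succ_ne_zero k)) h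
    obtain ⟨q, hq⟩ := hpm
    have hq0 : q ≠ 0 := by rintro rfl; rw [Nat.mul_zero] at hq; exact hm hq
    have hsub : stmt18S (ZMod m) p k ⊆ {x : ZMod m | p • x = 0} := fun x hx => hx.1
    have h1 : Nat.card (stmt18S (ZMod m) p k) ≤ Nat.card {x : ZMod m | p • x = 0} :=
      Nat.card_mono (Set.toFinite _) hsub
    refine h1.trans ?_
    -- surjection Fin p → torsion
    have hmem : ∀ t : Fin p, ((t.val * q : ℕ) : ZMod m) ∈ {x : ZMod m | p • x = 0} := by
      intro t
      show p • _ = 0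
      rw [stmt18_smul_cast, ← Nat.mul_assoc, Nat.mul_comm p t.val, Nat.mul_assoc, ← hq,
        ZMod.natCast_eq_zero_iff]
      exact Dvd.intro_left _ rfl
    have hsurj : Function.Surjective (fun t : Fin p => (⟨_, hmem t⟩ : {x : ZMod m | p • x = 0})) := by
      rintro ⟨x, hx⟩
      have hdvd : m ∣ p * x.val := by
        rw [← ZMod.natCast_eq_zero_iff, ← stmt18_smul_zmod]
        exact hx
      obtain ⟨c, hc⟩ := hdvd
      have hc2 : p * x.val = p * (q * c) := by rw [hc, hq]; ring
      have hxval : x.val = q * c := Nat.eq_of_mul_eq_mul_left hp.pos hc2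
      have hcp : c < p := by
        have hxm : q * c < q * p := by
          rw [← hxval, Nat.mul_comm q p, ← hq]; exact x.val_lt
        exact Nat.lt_of_mul_lt_mul_left hxm
      refine ⟨⟨c, hcp⟩, ?_⟩
      apply Subtype.ext
      show ((c * q : ℕ) : ZMod m) = x
      rw [Nat.mul_comm, ← hxval, ZMod.natCast_rightInverse x]
    have := Nat.card_le_card_of_surjective _ hsurj
    rwa [Nat.card_eq_fintype_card (α := Fin p), Fintype.card_fin] at this
  · -- all elements are 0
    have hzero : ∀ x ∈ stmt18S (ZMod m) p k, x = 0 := by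
      rintro x ⟨h1, y, h2⟩
      have hk1 : m ∣ p ^ (k+1) * y.val := by
        rw [← ZMod.natCast_eq_zero_iff, ← stmt18_smul_zmod, pow_succ, Nat.mul_comm (p^k) p,
          mul_smul, h2]
        exact h1
      set v := m.factorization p with hv
      have hvk : v ≤ k := by
        by_contra hc
        exact h (dvd_trans (pow_dvd_pow p (by omega)) (Nat.ordProj_dvd m p))
      have hco : Nat.Coprime (p ^ (k+1)) (ordCompl[p] m) :=
        Nat.Coprime.pow_left _ (Nat.coprime_ordCompl hp hm)
      have hdvd1 : ordCompl[p] m ∣ p ^ (k+1) * y.val :=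
        dvd_trans (Nat.ordCompl_dvd m p) hk1
      have hdvd2 : ordCompl[p] m ∣ y.val := (Nat.Coprime.dvd_of_dvd_mul_left hco.symm hdvd1)
      have hmd : m ∣ p ^ k * y.val := by
        conv_lhs => rw [← Nat.ordProj_mul_ordCompl_eq_self m p]
        exact mul_dvd_mul (pow_dvd_pow p hvk) hdvd2
      rw [← h2, stmt18_smul_zmod, ZMod.natCast_eq_zero_iff]
      exact hmd
    have hsub : stmt18S (ZMod m) p k ⊆ {(0 : ZMod m)} := fun x hx => hzero x hx
    calc Nat.card (stmt18S (ZMod m) p k) ≤ Nat.card ({(0 : ZMod m)} : Set (ZMod m)) :=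
          Nat.card_mono (Set.toFinite _) hsub
      _ = 1 := by simp


theorem stmt18S_zero_mem (A : Type*) [AddCommGroup A] (p k : ℕ) : 0 ∈ stmt18S A p k :=
  ⟨smul_zero _, 0, smul_zero _⟩

-- transfer along AddEquiv
theorem stmt18S_card_congr {A B : Type*} [AddCommGroup A] [AddCommGroup B]
    (f : A ≃+ B) (p k : ℕ) : Nat.card (stmt18S A p k) = Nat.card (stmt18S B p k) := by
  apply Nat.card_congr
  refine Equiv.subtypeEquiv f.toEquiv (fun x => ?_)
  constructor
  · rintro ⟨h1, y, h2⟩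
    refine ⟨?_, f y, ?_⟩
    · show p • f x = 0
      rw [← map_nsmul, h1, map_zero]
    · show p ^ k • f y = f x
      rw [← map_nsmul, h2]
  · rintro ⟨h1, y, h2⟩
    refine ⟨?_, f.symm y, ?_⟩
    · have : f (p • x) = f 0 := by rw [map_nsmul, map_zero]; exact h1
      exact f.injective this
    · apply f.injective
      rw [map_nsmul, f.apply_symm_apply]
      exact h2

-- monotone under subgroup
theorem stmt18S_card_le {G : Type*} [AddCommGroup G] [Finite G] (H : AddSubgroup G) (p k : ℕ) :
    Nat.card (stmt18S H p k) ≤ Nat.card (stmt18S G p k) := by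
  have hmap : ∀ x : stmt18S H p k, (x.val.val : G) ∈ stmt18S G p k := by
    rintro ⟨x, h1, y, h2⟩
    constructor
    · show p • (x : G) = 0
      rw [← AddSubmonoidClass.coe_nsmul, h1]; rfl
    · exact ⟨y, by rw [← AddSubmonoidClass.coe_nsmul, h2]⟩
  apply Nat.card_le_card_of_injective (fun x => ⟨x.val.val, hmap x⟩)
  intro a b hab
  have := congrArg Subtype.val hab
  simp only at this
  exact Subtype.ext (Subtype.ext this)

-- product
theorem stmt18S_card_pi {ι : Type*} [Fintype ι] (A : ι → Type*) [∀ i, AddCommGroup (A i)]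
    (p k : ℕ) : Nat.card (stmt18S (∀ i, A i) p k) = ∏ i, Nat.card (stmt18S (A i) p k) := by
  rw [← Nat.card_pi]
  apply Nat.card_congr
  refine (Equiv.subtypeEquivRight (fun x => ?_)).trans
    (Equiv.subtypePiEquivPi (p := fun i a => a ∈ stmt18S (A i) p k))
  constructor
  · rintro ⟨h1, y, h2⟩ i
    exact ⟨congrFun h1 i, y i, congrFun h2 i⟩
  · intro h
    refine ⟨funext fun i => (h i).1, fun i => (h i).2.choose, funext fun i => (h i).2.choose_spec⟩

theorem stmt18 {G : Type*} [AddCommGroup G] [Finite G]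
    (d : ℕ) (n : Fin d → ℕ) (hn1 : ∀ i, 1 < n i)
    (hndvd : ∀ i j : Fin d, i ≤ j → n i ∣ n j)
    (e : G ≃+ ∀ i : Fin d, ZMod (n i))
    (H : AddSubgroup G)
    (r : ℕ) (n' : Fin r → ℕ) (hn'1 : ∀ i, 1 < n' i)
    (hn'dvd : ∀ i j : Fin r, i ≤ j → n' i ∣ n' j)
    (e' : H ≃+ ∀ i : Fin r, ZMod (n' i)) :
    ∃ h : r ≤ d, ∀ i : Fin r,
      n' i ∣ n ⟨d - r + i.val, by have := i.isLt; omega⟩ := by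
  have key : ∀ p k : ℕ, p.Prime →
      (Finset.univ.filter fun j : Fin r => p ^ (k+1) ∣ n' j).card ≤
      (Finset.univ.filter fun i : Fin d => p ^ (k+1) ∣ n i).card := by
    intro p k hp
    have hge : p ^ (Finset.univ.filter fun j : Fin r => p ^ (k+1) ∣ n' j).card ≤
        ∏ j, Nat.card (stmt18S (ZMod (n' j)) p k) := by
      have heq : ∏ j, (if p ^ (k+1) ∣ n' j then p else 1) =
          p ^ (Finset.univ.filter fun j : Fin r => p ^ (k+1) ∣ n' j).card := by
        rw [← Finset.prod_filter, Finset.prod_const]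
      rw [← heq]
      exact Finset.prod_le_prod' fun j _ =>
        stmt18S_zmod_ge (n' j) p k hp (by have := hn'1 j; omega)
    have hle : (∏ i, Nat.card (stmt18S (ZMod (n i)) p k)) ≤
        p ^ (Finset.univ.filter fun i : Fin d => p ^ (k+1) ∣ n i).card := by
      have heq : ∏ i, (if p ^ (k+1) ∣ n i then p else 1) =
          p ^ (Finset.univ.filter fun i : Fin d => p ^ (k+1) ∣ n i).card := by
        rw [← Finset.prod_filter, Finset.prod_const]
      rw [← heq]
      exact Finset.prod_le_prod' fun i _ =>
        stmt18S_zmod_le (n i) p k hp (by have := hn1 i; omega)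
    have hchain : p ^ (Finset.univ.filter fun j : Fin r => p ^ (k+1) ∣ n' j).card ≤
        p ^ (Finset.univ.filter fun i : Fin d => p ^ (k+1) ∣ n i).card := by
      calc p ^ (Finset.univ.filter fun j : Fin r => p ^ (k+1) ∣ n' j).card
          ≤ ∏ j, Nat.card (stmt18S (ZMod (n' j)) p k) := hge
        _ = Nat.card (stmt18S (∀ j, ZMod (n' j)) p k) := (stmt18S_card_pi _ p k).symm
        _ = Nat.card (stmt18S H p k) := (stmt18S_card_congr e' p k).symm
        _ ≤ Nat.card (stmt18S G p k) := stmt18S_card_le H p k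
        _ = Nat.card (stmt18S (∀ i, ZMod (n i)) p k) := stmt18S_card_congr e p k
        _ = ∏ i, Nat.card (stmt18S (ZMod (n i)) p k) := stmt18S_card_pi _ p k
        _ ≤ _ := hle
    exact (Nat.pow_le_pow_iff_right hp.one_lt).mp hchain
  have hrd : r ≤ d := by
    rcases Nat.eq_zero_or_pos r with h0 | hrpos
    · omega
    · obtain ⟨p, hp, hpd⟩ := Nat.exists_prime_and_dvd
        (n := n' ⟨0, hrpos⟩) (by have := hn'1 ⟨0, hrpos⟩; omega)
      have h1 := key p 0 hp
      have hall : (Finset.univ.filter fun j : Fin r => p ^ (0+1) ∣ n' j) = Finset.univ := by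
        apply Finset.filter_true_of_mem
        intro j _
        rw [pow_one]
        exact dvd_trans hpd (hn'dvd ⟨0, hrpos⟩ j (by simp [Fin.le_def]))
      rw [hall, Finset.card_univ, Fintype.card_fin] at h1
      calc r ≤ _ := h1
        _ ≤ Finset.univ.card := Finset.card_filter_le _ _
        _ = d := by simp
  refine ⟨hrd, fun i => ?_⟩
  have hi := i.isLt
  have hni0 : n' i ≠ 0 := by have := hn'1 i; omega
  set t : Fin d := ⟨d - r + i.val, by omega⟩ with htdef
  have hnt0 : n t ≠ 0 := by have := hn1 t; omega
  rw [← Nat.factorization_le_iff_dvd hni0 hnt0]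
  rw [Finsupp.le_def]
  intro p
  by_cases hp : p.Prime
  · set a := (n' i).factorization p with ha
    rcases Nat.eq_zero_or_pos a with ha0 | hapos
    · rw [ha0]; exact Nat.zero_le _
    · have hpa : p ^ a ∣ n' i := Nat.ordProj_dvd _ _
      have h2 := key p (a - 1) hp
      have hae : a - 1 + 1 = a := by omega
      rw [hae] at h2
      have h1 : r - i.val ≤ (Finset.univ.filter fun j : Fin r => p ^ a ∣ n' j).card := by
        have hsub : Finset.Ici i ⊆ Finset.univ.filter fun j : Fin r => p ^ a ∣ n' j := by
          intro j hj
          rw [Finset.mem_filter]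
          exact ⟨Finset.mem_univ _, dvd_trans hpa (hn'dvd i j (Finset.mem_Ici.mp hj))⟩
        have := Finset.card_le_card hsub
        rwa [Fin.card_Ici] at this
      have h3 : r - i.val ≤ (Finset.univ.filter fun j : Fin d => p ^ a ∣ n j).card :=
        le_trans h1 h2
      have hgoal : p ^ a ∣ n t := by
        by_contra hnd
        have hgt : ∀ j : Fin d, p ^ a ∣ n j → t < j := by
          intro j hj
          by_contra hle
          push_neg at hle
          exact hnd (dvd_trans hj (hndvd j t hle))
        have hsub : (Finset.univ.filter fun j : Fin d => p ^ a ∣ n j) ⊆ Finset.Ioi t := by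
          intro j hj
          exact Finset.mem_Ioi.mpr (hgt j (Finset.mem_filter.mp hj).2)
        have hcard := Finset.card_le_card hsub
        rw [Fin.card_Ioi] at hcard
        have htval : t.val = d - r + i.val := rfl
        omega
      -- conclude factorization bound
      have := (Nat.Prime.pow_dvd_iff_le_factorization hp hnt0).mp hgoal
      exact this
  · rw [Nat.factorization_eq_zero_of_not_prime _ hp]
    exact Nat.zero_le _
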